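/- Let P and Q be orthogonal projections on a finite-dimensional Hilbert space. Then 2Q(Q+P)^{+}P is the orthogonal projection onto range(P) ∩ range(Q), where (Q+P)^{+} denotes the Moore–Penrose pseudoinverse. -/

import Mathlib

open Matrix

/-- Moore–Penrose pseudoinverse of a Hermitian matrix, via the spectral decomposition. -/
noncomputable def herPinv {n : ℕ} {A : Matrix (Fin n) (Fin n) ℂ} (hA : A.IsHermitian) :
    Matrix (Fin n) (Fin n) ℂ :=
  (hA.eigenvectorUnitary : Matrix (Fin n) (Fin n) ℂ) *
    Matrix.diagonal (fun i => if hA.eigenvalues i = 0 then (0 : ℂ) else ((hA.eigenvalues i)⁻¹ : ℂ)) *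
      (hA.eigenvectorUnitary : Matrix (Fin n) (Fin n) ℂ)ᴴ

namespace AD

open scoped ComplexOrder

variable {n : ℕ} {A : Matrix (Fin n) (Fin n) ℂ} (hA : A.IsHermitian)

/-- Projection onto the range of A. -/
noncomputable def projE : Matrix (Fin n) (Fin n) ℂ :=
  (hA.eigenvectorUnitary : Matrix (Fin n) (Fin n) ℂ) *
    Matrix.diagonal (fun i => if hA.eigenvalues i = 0 then (0 : ℂ) else 1) *
      (hA.eigenvectorUnitary : Matrix (Fin n) (Fin n) ℂ)ᴴ

lemma hU : (hA.eigenvectorUnitary : Matrix (Fin n) (Fin n) ℂ)ᴴ *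
    (hA.eigenvectorUnitary : Matrix (Fin n) (Fin n) ℂ) = 1 := by
  simpa [Matrix.star_eq_conjTranspose] using
    (Matrix.mem_unitaryGroup_iff').mp (hA.eigenvectorUnitary).2

lemma sandwich_mul (d e : Fin n → ℂ) :
    ((hA.eigenvectorUnitary : Matrix (Fin n) (Fin n) ℂ) * Matrix.diagonal d *
        (hA.eigenvectorUnitary : Matrix (Fin n) (Fin n) ℂ)ᴴ) *
      ((hA.eigenvectorUnitary : Matrix (Fin n) (Fin n) ℂ) * Matrix.diagonal e *
        (hA.eigenvectorUnitary : Matrix (Fin n) (Fin n) ℂ)ᴴ) =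
    (hA.eigenvectorUnitary : Matrix (Fin n) (Fin n) ℂ) *
      Matrix.diagonal (fun i => d i * e i) *
      (hA.eigenvectorUnitary : Matrix (Fin n) (Fin n) ℂ)ᴴ := by
  have h := hU hA
  calc ((hA.eigenvectorUnitary : Matrix (Fin n) (Fin n) ℂ) * Matrix.diagonal d *
        (hA.eigenvectorUnitary : Matrix (Fin n) (Fin n) ℂ)ᴴ) *
      ((hA.eigenvectorUnitary : Matrix (Fin n) (Fin n) ℂ) * Matrix.diagonal e *
        (hA.eigenvectorUnitary : Matrix (Fin n) (Fin n) ℂ)ᴴ)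
      = (hA.eigenvectorUnitary : Matrix (Fin n) (Fin n) ℂ) * (Matrix.diagonal d *
        (((hA.eigenvectorUnitary : Matrix (Fin n) (Fin n) ℂ)ᴴ *
          (hA.eigenvectorUnitary : Matrix (Fin n) (Fin n) ℂ)) * Matrix.diagonal e)) *
        (hA.eigenvectorUnitary : Matrix (Fin n) (Fin n) ℂ)ᴴ := by
        simp only [Matrix.mul_assoc]
    _ = _ := by rw [h, Matrix.one_mul, Matrix.diagonal_mul_diagonal]

lemma spectral : A = (hA.eigenvectorUnitary : Matrix (Fin n) (Fin n) ℂ) *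
    Matrix.diagonal (fun i => (hA.eigenvalues i : ℂ)) *
      (hA.eigenvectorUnitary : Matrix (Fin n) (Fin n) ℂ)ᴴ := by
  simpa [Matrix.star_eq_conjTranspose, Function.comp_def] using hA.spectral_theorem

lemma herPinv_herm : (herPinv hA)ᴴ = herPinv hA := by
  have hstar : (star fun i => if hA.eigenvalues i = 0 then (0:ℂ)
      else ((hA.eigenvalues i)⁻¹ : ℂ)) =
      (fun i => if hA.eigenvalues i = 0 then (0:ℂ) else ((hA.eigenvalues i)⁻¹ : ℂ)) := by
    funext i
    by_cases h : hA.eigenvalues i = 0 <;>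
      simp [h, Pi.star_apply, ← Complex.ofReal_inv]
  unfold herPinv
  simp only [Matrix.conjTranspose_mul, Matrix.conjTranspose_conjTranspose,
    Matrix.diagonal_conjTranspose, hstar, Matrix.mul_assoc]

lemma A_mul_herPinv : A * herPinv hA = projE hA := by
  have hfun : (fun i => (hA.eigenvalues i : ℂ) *
      (if hA.eigenvalues i = 0 then (0:ℂ) else ((hA.eigenvalues i)⁻¹ : ℂ))) =
      (fun i => if hA.eigenvalues i = 0 then (0:ℂ) else 1) := by
    funext i
    by_cases h : hA.eigenvalues i = 0 <;>
      simp [h, ← Complex.ofReal_inv, ← Complex.ofReal_mul, mul_inv_cancel₀]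
  unfold herPinv projE
  rw [← hfun, ← sandwich_mul hA, ← spectral hA]

lemma herPinv_mul_A : herPinv hA * A = projE hA := by
  have hfun : (fun i => (if hA.eigenvalues i = 0 then (0:ℂ) else ((hA.eigenvalues i)⁻¹ : ℂ)) *
      (hA.eigenvalues i : ℂ)) =
      (fun i => if hA.eigenvalues i = 0 then (0:ℂ) else 1) := by
    funext i
    by_cases h : hA.eigenvalues i = 0 <;>
      simp [h, ← Complex.ofReal_inv, ← Complex.ofReal_mul, inv_mul_cancel₀]
  unfold herPinv projE
  rw [← hfun, ← sandwich_mul hA, ← spectral hA]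

lemma projE_herm : (projE hA)ᴴ = projE hA := by
  have hstar : (star fun i => if hA.eigenvalues i = 0 then (0:ℂ) else 1) =
      (fun i => if hA.eigenvalues i = 0 then (0:ℂ) else 1) := by
    funext i
    by_cases h : hA.eigenvalues i = 0 <;> simp [h, Pi.star_apply]
  unfold projE
  simp only [Matrix.conjTranspose_mul, Matrix.conjTranspose_conjTranspose,
    Matrix.diagonal_conjTranspose, hstar, Matrix.mul_assoc]

lemma projE_mul_A : projE hA * A = A := by
  have hfun : (fun i => (if hA.eigenvalues i = 0 then (0:ℂ) else 1) *
      (hA.eigenvalues i : ℂ)) = (fun i => (hA.eigenvalues i : ℂ)) := by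
    funext i
    by_cases h : hA.eigenvalues i = 0 <;> simp [h]
  unfold projE
  conv_rhs => rw [spectral hA]
  rw [← hfun, ← sandwich_mul hA, ← spectral hA]

lemma A_mul_projE : A * projE hA = A := by
  have := congrArg Matrix.conjTranspose (projE_mul_A hA)
  simpa [Matrix.conjTranspose_mul, projE_herm hA, hA.eq] using this

lemma ext_mulVec {M N : Matrix (Fin n) (Fin n) ℂ} (h : ∀ v, M *ᵥ v = N *ᵥ v) : M = N := by
  ext i j
  have := congrFun (h (Pi.single j 1)) i
  simpa using this

lemma proj_dot {S : Matrix (Fin n) (Fin n) ℂ} (hS : Sᴴ = S) (hS2 : S * S = S)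
    (w : Fin n → ℂ) :
    star w ⬝ᵥ (S *ᵥ w) = star (S *ᵥ w) ⬝ᵥ (S *ᵥ w) := by
  rw [Matrix.star_mulVec, ← Matrix.dotProduct_mulVec, Matrix.mulVec_mulVec, hS, hS2]

/-- If `(Q+P) * M = 0` for hermitian idempotents `P`, `Q`, then `P * M = 0`. -/
lemma absorb {P M : Matrix (Fin n) (Fin n) ℂ} (hP : Pᴴ = P) (hP2 : P * P = P)
    {Q : Matrix (Fin n) (Fin n) ℂ} (hQ : Qᴴ = Q) (hQ2 : Q * Q = Q)
    (h : (Q + P) * M = 0) : P * M = 0 := by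
  apply ext_mulVec
  intro v
  set w := M *ᵥ v with hw
  have h0 : star w ⬝ᵥ ((Q + P) *ᵥ w) = 0 := by
    rw [hw, Matrix.mulVec_mulVec, h]
    simp
  rw [Matrix.add_mulVec, dotProduct_add, proj_dot hP hP2, proj_dot hQ hQ2] at h0
  have hQ0 := dotProduct_star_self_nonneg (Q *ᵥ w)
  have hP0 := dotProduct_star_self_nonneg (P *ᵥ w)
  have h1 : star (P *ᵥ w) ⬝ᵥ (P *ᵥ w) = 0 :=
    ((add_eq_zero_iff_of_nonneg hQ0 hP0).mp h0).2
  have h2 : P *ᵥ w = 0 := dotProduct_star_self_eq_zero.mp h1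
  rw [← Matrix.mulVec_mulVec, ← hw, h2]
  simp

end AD

/-- Anderson–Duffin: for orthogonal projections P, Q on ℂⁿ, the operator
2 Q (Q+P)⁺ P is the orthogonal projection onto range(P) ∩ range(Q). -/
theorem stmt14 {n : ℕ} (P Q : Matrix (Fin n) (Fin n) ℂ)
    (hP : Pᴴ = P) (hP2 : P * P = P) (hQ : Qᴴ = Q) (hQ2 : Q * Q = Q)
    (hPQ : (Q + P).IsHermitian)
    (R : Matrix (Fin n) (Fin n) ℂ)
    (hR : R = (2 : ℂ) • (Q * herPinv hPQ * P)) :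
    Rᴴ = R ∧ R * R = R ∧
    (∀ v : Fin n → ℂ,
      R.mulVec v ∈ (LinearMap.range P.mulVecLin ⊓ LinearMap.range Q.mulVecLin)) ∧
    (∀ v ∈ (LinearMap.range P.mulVecLin ⊓ LinearMap.range Q.mulVecLin),
      R.mulVec v = v) := by
  set A : Matrix (Fin n) (Fin n) ℂ := Q + P with hA
  set B : Matrix (Fin n) (Fin n) ℂ := herPinv hPQ with hB
  set E : Matrix (Fin n) (Fin n) ℂ := AD.projE hPQ with hE
  have hBherm : Bᴴ = B := AD.herPinv_herm hPQ
  have hEherm : Eᴴ = E := AD.projE_herm hPQ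
  have hAB : A * B = E := AD.A_mul_herPinv hPQ
  have hBA : B * A = E := AD.herPinv_mul_A hPQ
  have hEA : E * A = A := AD.projE_mul_A hPQ
  have hAE : A * E = A := AD.A_mul_projE hPQ
  -- E absorbs P and Q
  have hA1E : A * (1 - E) = 0 := by rw [Matrix.mul_sub, hAE, Matrix.mul_one, sub_self]
  have hPE : P * E = P := by
    have h0 : P * (1 - E) = 0 := AD.absorb hP hP2 hQ hQ2 hA1E
    rw [Matrix.mul_sub, Matrix.mul_one, sub_eq_zero] at h0
    exact h0.symm
  have hQE : Q * E = Q := by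
    have hA1E' : (P + Q) * (1 - E) = 0 := by rwa [add_comm P Q]
    have h0 : Q * (1 - E) = 0 := AD.absorb hQ hQ2 hP hP2 hA1E'
    rw [Matrix.mul_sub, Matrix.mul_one, sub_eq_zero] at h0
    exact h0.symm
  have hEP : E * P = P := by
    have := congrArg Matrix.conjTranspose hPE
    simpa [Matrix.conjTranspose_mul, hEherm, hP] using this
  have hEQ : E * Q = Q := by
    have := congrArg Matrix.conjTranspose hQE
    simpa [Matrix.conjTranspose_mul, hEherm, hQ] using this
  -- the symmetry identity
  have hQeq : Q = A - P := by rw [hA, add_sub_cancel_right]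
  have hkey1 : Q * B * P = P - P * B * P := by
    rw [hQeq, Matrix.sub_mul, Matrix.sub_mul, Matrix.mul_assoc A B P, ← Matrix.mul_assoc A B P,
      hAB, hEP]
  have hkey2 : P * B * Q = P - P * B * P := by
    rw [hQeq, Matrix.mul_sub, Matrix.mul_assoc P B A, hBA, hPE]
  have hsym : Q * B * P = P * B * Q := by rw [hkey1, hkey2]
  -- Hermitian
  have hRherm : Rᴴ = R := by
    rw [hR, Matrix.conjTranspose_smul]
    simp only [Matrix.conjTranspose_mul, hBherm, hP, hQ]
    rw [← Matrix.mul_assoc, ← hsym, star_ofNat]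
  -- membership
  have hmem : ∀ v : Fin n → ℂ,
      R.mulVec v ∈ (LinearMap.range P.mulVecLin ⊓ LinearMap.range Q.mulVecLin) := by
    intro v
    have hRP : R = P * ((2:ℂ) • (B * Q)) := by
      rw [hR, mul_smul_comm, ← Matrix.mul_assoc, ← hsym]
    have hRQ : R = Q * ((2:ℂ) • (B * P)) := by
      rw [hR, mul_smul_comm, ← Matrix.mul_assoc]
    constructor
    · exact ⟨((2:ℂ) • (B * Q)).mulVec v, by
        rw [Matrix.mulVecLin_apply, Matrix.mulVec_mulVec, ← hRP]⟩
    · exact ⟨((2:ℂ) • (B * P)).mulVec v, by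
        rw [Matrix.mulVecLin_apply, Matrix.mulVec_mulVec, ← hRQ]⟩
  -- fixed points
  have hfix : ∀ v ∈ (LinearMap.range P.mulVecLin ⊓ LinearMap.range Q.mulVecLin),
      R.mulVec v = v := by
    rintro v ⟨⟨a, ha⟩, ⟨b, hb⟩⟩
    rw [Matrix.mulVecLin_apply] at ha hb
    have hPv : P *ᵥ v = v := by
      rw [← ha, Matrix.mulVec_mulVec, hP2]
    have hQv : Q *ᵥ v = v := by
      rw [← hb, Matrix.mulVec_mulVec, hQ2]
    have hEv : E *ᵥ v = v := by
      rw [← hPv, Matrix.mulVec_mulVec, hEP]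
    have hAv : A *ᵥ v = v + v := by
      rw [hA, Matrix.add_mulVec, hPv, hQv]
    have hBv : B *ᵥ v + B *ᵥ v = v := by
      have : B *ᵥ (A *ᵥ v) = v := by rw [Matrix.mulVec_mulVec, hBA, hEv]
      rwa [hAv, Matrix.mulVec_add] at this
    rw [hR, Matrix.smul_mulVec]
    have hsplit : (Q * B * P) *ᵥ v = Q *ᵥ (B *ᵥ (P *ᵥ v)) := by
      rw [Matrix.mulVec_mulVec, Matrix.mulVec_mulVec]
    rw [hsplit, hPv, ← Matrix.mulVec_smul, two_smul ℂ, hBv, hQv]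
  refine ⟨hRherm, ?_, hmem, hfix⟩
  apply AD.ext_mulVec
  intro v
  rw [← Matrix.mulVec_mulVec]
  exact hfix _ (hmem v)
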